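/- Equip Fin r → ℂ with the sup norm and M_r(ℂ) with the operator norm. Let ℓ : (Fin r → ℂ) → M_r(ℂ) be a ℂ-linear map with ‖ℓ(x)‖ = ‖x‖ for all x, and set cᵢ := ℓ(εᵢ), where εᵢ is the i-th standard basis vector. Then each cᵢ satisfies cᵢ cᵢᴴ cᵢ = cᵢ and has matrix rank 1, and for i ≠ j one has cᵢ cⱼᴴ = 0 and cᵢᴴ cⱼ = 0. -/

import Mathlib

open Matrix ContinuousLinearMap
open scoped Matrix.Norms.L2Operator InnerProductSpace

variable {E : Type*} [NormedAddCommGroup E] [InnerProductSpace ℂ E]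

/-- In a finite-dimensional nontrivial inner product space, the operator norm is attained
on the unit sphere. -/
lemma stmt7_attain [FiniteDimensional ℂ E] [Nontrivial E] (T : E →L[ℂ] E) :
    ∃ ξ : E, ‖ξ‖ = 1 ∧ ‖T ξ‖ = ‖T‖ := by
  obtain ⟨ξ, hξ, hmax⟩ := (isCompact_sphere (0 : E) 1).exists_isMaxOn
    (NormedSpace.sphere_nonempty.mpr zero_le_one)
    ((continuous_norm.comp T.continuous).continuousOn)
  rw [mem_sphere_zero_iff_norm] at hξ
  refine ⟨ξ, hξ, le_antisymm (by simpa [hξ] using T.le_opNorm ξ) ?_⟩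
  refine T.opNorm_le_bound (norm_nonneg _) fun x => ?_
  rcases eq_or_ne x 0 with rfl | hx
  · simp
  · have hx0 : (0:ℝ) < ‖x‖ := norm_pos_iff.mpr hx
    have hxs : ‖x‖⁻¹ • x ∈ Metric.sphere (0 : E) 1 := by
      rw [mem_sphere_zero_iff_norm, norm_smul, norm_inv, norm_norm,
        inv_mul_cancel₀ hx0.ne']
    have h : ‖T (‖x‖⁻¹ • x)‖ ≤ ‖T ξ‖ := hmax hxs
    rw [T.map_smul_of_tower, norm_smul, norm_inv, norm_norm] at h
    calc ‖T x‖ = ‖x‖ * (‖x‖⁻¹ * ‖T x‖) := by field_simp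
      _ ≤ ‖x‖ * ‖T ξ‖ := by nlinarith
      _ = ‖T ξ‖ * ‖x‖ := mul_comm _ _

/-- If `a` attains its norm bound `1` at `ξ` and `‖a ± b‖ ≤ 1`, then `b ξ = 0`. -/
lemma stmt7_killer (a b : E →L[ℂ] E) (h1 : ‖a + b‖ ≤ 1) (h2 : ‖a - b‖ ≤ 1)
    (ξ : E) (hξ : ‖a ξ‖ = ‖ξ‖) : b ξ = 0 := by
  have p := parallelogram_law_with_norm ℂ (a ξ) (b ξ)
  have e1 : ‖a ξ + b ξ‖ ≤ ‖ξ‖ := by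
    have := (a + b).le_opNorm ξ
    simp only [ContinuousLinearMap.add_apply] at this
    nlinarith [norm_nonneg ξ]
  have e2 : ‖a ξ - b ξ‖ ≤ ‖ξ‖ := by
    have := (a - b).le_opNorm ξ
    simp only [ContinuousLinearMap.sub_apply] at this
    nlinarith [norm_nonneg ξ]
  have hb : ‖b ξ‖ = 0 := by
    nlinarith [norm_nonneg (b ξ), norm_nonneg (a ξ + b ξ), norm_nonneg (a ξ - b ξ)]
  exact norm_eq_zero.mp hb

/-- Cauchy–Schwarz equality case: if `‖a‖ ≤ 1`, `‖ξ‖ = 1` and `‖a ξ‖ = 1`, then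
`a† (a ξ) = ξ`. -/
lemma stmt7_cs [FiniteDimensional ℂ E] (a : E →L[ℂ] E) (ha : ‖a‖ ≤ 1)
    (ξ : E) (hξ : ‖ξ‖ = 1) (haξ : ‖a ξ‖ = 1) :
    ContinuousLinearMap.adjoint a (a ξ) = ξ := by
  set u := ContinuousLinearMap.adjoint a (a ξ) with hu_def
  have hu : ‖u‖ ≤ 1 := by
    have h1 := (ContinuousLinearMap.adjoint a).le_opNorm (a ξ)
    have h2 : ‖ContinuousLinearMap.adjoint a‖ = ‖a‖ :=
      ContinuousLinearMap.adjoint.norm_map a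
    rw [h2, haξ, mul_one] at h1
    exact h1.trans ha
  have hre : RCLike.re (⟪u, ξ⟫_ℂ) = 1 := by
    rw [hu_def, ContinuousLinearMap.adjoint_inner_left]
    rw [inner_self_eq_norm_sq_to_K, haξ]
    norm_num
  have hsq : ‖u - ξ‖ ^ 2 = ‖u‖ ^ 2 - 2 * RCLike.re (⟪u, ξ⟫_ℂ) + ‖ξ‖ ^ 2 :=
    norm_sub_sq u ξ
  have : ‖u - ξ‖ ^ 2 ≤ 0 := by rw [hsq, hre, hξ]; nlinarith [hu, norm_nonneg u]
  have h0 : ‖u - ξ‖ = 0 := by nlinarith [norm_nonneg (u - ξ)]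
  have := norm_eq_zero.mp h0
  exact sub_eq_zero.mp this

set_option maxHeartbeats 1000000 in
/-- Theorem III.5 (final assertion) for `V = Mᵣ(ℂ)`: the images of the standard
basis vectors under a linear isometry from `(Fin r → ℂ, sup)` into `(Mᵣ(ℂ), op)`
form a Jordan frame: rank-one (primitive) tripotents which are mutually orthogonal. -/
theorem stmt7 (r : ℕ) (ℓ : (Fin r → ℂ) →ₗ[ℂ] Matrix (Fin r) (Fin r) ℂ)
    (hiso : ∀ x : Fin r → ℂ, ‖ℓ x‖ = ‖x‖)
    (c : Fin r → Matrix (Fin r) (Fin r) ℂ)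
    (hc : ∀ i, c i = ℓ (Pi.single i 1)) :
    (∀ i, c i * (c i)ᴴ * c i = c i) ∧
    (∀ i, (c i).rank = 1) ∧
    (∀ i j, i ≠ j → c i * (c j)ᴴ = 0 ∧ (c i)ᴴ * c j = 0) := by
  classical
  rcases Nat.eq_zero_or_pos r with hr | hr
  · subst hr
    exact ⟨fun i => i.elim0, fun i => i.elim0, fun i => i.elim0⟩
  haveI : Nonempty (Fin r) := ⟨⟨0, hr⟩⟩
  haveI : Nontrivial (EuclideanSpace ℂ (Fin r)) := by
    refine nontrivial_of_ne (EuclideanSpace.single ⟨0, hr⟩ (1 : ℂ)) 0 fun h => ?_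
    have h2 := congrArg norm h
    rw [EuclideanSpace.norm_single] at h2
    simp at h2
  let T : Fin r → (EuclideanSpace ℂ (Fin r) →L[ℂ] EuclideanSpace ℂ (Fin r)) :=
    fun i => Matrix.toEuclideanCLM (𝕜 := ℂ) (c i)
  have hTdef : ∀ i, Matrix.toEuclideanCLM (𝕜 := ℂ) (c i) = T i := fun _ => rfl
  -- norms of the `c i` and `T i`
  have hnorm_c : ∀ i, ‖c i‖ = 1 := by
    intro i
    rw [hc i, hiso, Pi.norm_single]
    norm_num
  have hnorm_T : ∀ i, ‖T i‖ = 1 := fun i => by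
    rw [← hTdef i, ← Matrix.cstar_norm_def]
    exact hnorm_c i
  -- sup-norm bounds
  have hsup : ∀ (i j : Fin r), i ≠ j → ∀ s : ℂ, ‖s‖ = 1 →
      ‖(Pi.single i (1 : ℂ) + Pi.single j s : Fin r → ℂ)‖ ≤ 1 := by
    intro i j hij s hs
    refine (pi_norm_le_iff_of_nonneg zero_le_one).mpr fun k => ?_
    simp only [Pi.add_apply, Pi.single_apply]
    split_ifs with h1 h2 h2
    · exact absurd (h1.symm.trans h2) hij
    · norm_num
    · simp [hs]
    · simp
  have hpm : ∀ i j, i ≠ j → ∀ s : ℂ, ‖s‖ = 1 → ‖c i + s • c j‖ ≤ 1 := by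
    intro i j hij s hs
    have key : c i + s • c j = ℓ (Pi.single i 1 + Pi.single j s) := by
      rw [map_add, ← hc i]
      congr 1
      have h1 : (Pi.single j s : Fin r → ℂ) = s • (Pi.single j 1 : Fin r → ℂ) := by
        ext k
        simp [Pi.single_apply]
      rw [h1, LinearMap.map_smul, ← hc j]
    rw [key, hiso]
    exact hsup i j hij s hs
  have hTsum : ∀ i j, i ≠ j → ‖T i + T j‖ ≤ 1 ∧ ‖T i - T j‖ ≤ 1 := by
    intro i j hij
    constructor
    · have key : T i + T j = Matrix.toEuclideanCLM (𝕜 := ℂ) (c i + c j) := by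
        rw [map_add, hTdef, hTdef]
      rw [key, ← Matrix.cstar_norm_def]
      have := hpm i j hij 1 (by norm_num)
      simpa using this
    · have key : T i - T j = Matrix.toEuclideanCLM (𝕜 := ℂ) (c i - c j) := by
        rw [map_sub, hTdef, hTdef]
      rw [key, ← Matrix.cstar_norm_def]
      have h' := hpm i j hij (-1) (by norm_num)
      rw [neg_one_smul, ← sub_eq_add_neg] at h'
      exact h'
  have hTsumStar : ∀ i j, i ≠ j →
      ‖adjoint (T i) + adjoint (T j)‖ ≤ 1 ∧ ‖adjoint (T i) - adjoint (T j)‖ ≤ 1 := by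
    intro i j hij
    obtain ⟨h1, h2⟩ := hTsum i j hij
    constructor
    · rw [← star_eq_adjoint, ← star_eq_adjoint, ← star_add, norm_star]
      exact h1
    · rw [← star_eq_adjoint, ← star_eq_adjoint, ← star_sub, norm_star]
      exact h2
  -- norm attainment
  have hexists : ∀ i, ∃ ξ : EuclideanSpace ℂ (Fin r), ‖ξ‖ = 1 ∧ ‖T i ξ‖ = 1 := fun i => by
    obtain ⟨ξ, h1, h2⟩ := stmt7_attain (T i)
    exact ⟨ξ, h1, by rw [h2, hnorm_T i]⟩
  choose ξ hξ hTξ using hexists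
  let η : Fin r → EuclideanSpace ℂ (Fin r) := fun i => T i (ξ i)
  have hηdef : ∀ i, T i (ξ i) = η i := fun _ => rfl
  have hηn : ∀ i, ‖η i‖ = 1 := hTξ
  have hηne : ∀ i, η i ≠ 0 := fun i h => by
    have h1 : (1 : ℝ) = 0 := by rw [← hηn i, h, norm_zero]
    exact one_ne_zero h1
  have hξne : ∀ i, ξ i ≠ 0 := fun i h => by
    have h1 : (1 : ℝ) = 0 := by rw [← hξ i, h, norm_zero]
    exact one_ne_zero h1
  have hkill : ∀ i j, j ≠ i → T j (ξ i) = 0 := by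
    intro i j hji
    obtain ⟨h1, h2⟩ := hTsum i j (Ne.symm hji)
    exact stmt7_killer (T i) (T j) h1 h2 (ξ i) (by rw [hTξ i, hξ i])
  have hadj : ∀ i, adjoint (T i) (η i) = ξ i := fun i =>
    stmt7_cs (T i) (le_of_eq (hnorm_T i)) (ξ i) (hξ i) (hTξ i)
  have hkill' : ∀ i j, j ≠ i → adjoint (T j) (η i) = 0 := by
    intro i j hji
    obtain ⟨h1, h2⟩ := hTsumStar i j (Ne.symm hji)
    refine stmt7_killer (adjoint (T i)) (adjoint (T j)) h1 h2 (η i) ?_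
    rw [hadj i, hξ i, hηn i]
  -- linear independence and bases
  have hli : LinearIndependent ℂ ξ := by
    rw [Fintype.linearIndependent_iff]
    intro g hg j
    have h0 := congrArg (T j) hg
    rw [map_zero, map_sum] at h0
    simp only [_root_.map_smul] at h0
    rw [Finset.sum_eq_single j (fun i _ hij => by rw [hkill i j (Ne.symm hij), smul_zero])
      (fun h => absurd (Finset.mem_univ j) h)] at h0
    rw [hηdef j] at h0
    rcases smul_eq_zero.mp h0 with h | h
    · exact h
    · exact absurd h (hηne j)
  have hliη : LinearIndependent ℂ η := by
    rw [Fintype.linearIndependent_iff]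
    intro g hg j
    have h0 := congrArg (adjoint (T j)) hg
    rw [map_zero, map_sum] at h0
    simp only [_root_.map_smul] at h0
    rw [Finset.sum_eq_single j (fun i _ hij => by rw [hkill' i j (Ne.symm hij), smul_zero])
      (fun h => absurd (Finset.mem_univ j) h)] at h0
    rw [hadj j] at h0
    rcases smul_eq_zero.mp h0 with h | h
    · exact h
    · exact absurd h (hξne j)
  have hcard : Fintype.card (Fin r) = Module.finrank ℂ (EuclideanSpace ℂ (Fin r)) := by
    simp [finrank_euclideanSpace_fin]
  let b := basisOfLinearIndependentOfCardEqFinrank hli hcard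
  have hb : ∀ k, b k = ξ k := fun k => by
    rw [show b = basisOfLinearIndependentOfCardEqFinrank hli hcard from rfl,
      coe_basisOfLinearIndependentOfCardEqFinrank]
  let bη := basisOfLinearIndependentOfCardEqFinrank hliη hcard
  have hbη : ∀ k, bη k = η k := fun k => by
    rw [show bη = basisOfLinearIndependentOfCardEqFinrank hliη hcard from rfl,
      coe_basisOfLinearIndependentOfCardEqFinrank]
  have ext_basis : ∀ f g : EuclideanSpace ℂ (Fin r) →L[ℂ] EuclideanSpace ℂ (Fin r),
      (∀ k, f (ξ k) = g (ξ k)) → f = g := fun f g h =>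
    ContinuousLinearMap.coe_injective (Module.Basis.ext b fun k => by rw [hb k]; exact h k)
  have ext_basisη : ∀ f g : EuclideanSpace ℂ (Fin r) →L[ℂ] EuclideanSpace ℂ (Fin r),
      (∀ k, f (η k) = g (η k)) → f = g := fun f g h =>
    ContinuousLinearMap.coe_injective (Module.Basis.ext bη fun k => by rw [hbη k]; exact h k)
  have hinj : Function.Injective (Matrix.toEuclideanCLM (n := Fin r) (𝕜 := ℂ)) :=
    (Matrix.toEuclideanCLM (n := Fin r) (𝕜 := ℂ)).injective
  have star_c : ∀ i, Matrix.toEuclideanCLM (𝕜 := ℂ) ((c i)ᴴ) = adjoint (T i) := by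
    intro i
    rw [← Matrix.star_eq_conjTranspose, map_star, star_eq_adjoint, hTdef]
  -- tripotency
  have G1 : ∀ i, c i * (c i)ᴴ * c i = c i := by
    intro i
    apply hinj
    rw [_root_.map_mul, _root_.map_mul, star_c, hTdef]
    refine ext_basis _ _ fun k => ?_
    rcases eq_or_ne k i with rfl | hk
    · simp only [ContinuousLinearMap.mul_apply]
      rw [hηdef k, hadj k]
    · simp only [ContinuousLinearMap.mul_apply]
      rw [hkill k i (Ne.symm hk), map_zero, map_zero]
  -- orthogonality
  have G3 : ∀ i j, i ≠ j → c i * (c j)ᴴ = 0 ∧ (c i)ᴴ * c j = 0 := by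
    intro i j hij
    constructor
    · apply hinj
      rw [_root_.map_mul, star_c, hTdef, map_zero]
      refine ext_basisη _ _ fun k => ?_
      simp only [ContinuousLinearMap.mul_apply, ContinuousLinearMap.zero_apply]
      rcases eq_or_ne k j with rfl | hk
      · rw [hadj k, hkill k i hij]
      · rw [hkill' k j (Ne.symm hk), map_zero]
    · apply hinj
      rw [_root_.map_mul, star_c, hTdef, map_zero]
      refine ext_basis _ _ fun k => ?_
      simp only [ContinuousLinearMap.mul_apply, ContinuousLinearMap.zero_apply]
      rcases eq_or_ne k j with rfl | hk
      · rw [hηdef k, hkill' k i hij]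
      · rw [hkill k j (Ne.symm hk), map_zero]
  -- rank
  have G2 : ∀ i, (c i).rank = 1 := by
    intro i
    let e : EuclideanSpace ℂ (Fin r) ≃ₗ[ℂ] (Fin r → ℂ) := WithLp.linearEquiv 2 ℂ (Fin r → ℂ)
    have hmv : ∀ x : EuclideanSpace ℂ (Fin r), (c i).mulVecLin (e x) = e (T i x) :=
      fun x => rfl
    have hrange : LinearMap.range ((c i).mulVecLin) = Submodule.span ℂ {e (η i)} := by
      have h1 : Set.range (⇑(b.map e)) = Set.range fun k => e (ξ k) :=
        congrArg Set.range (funext fun k => by rw [Module.Basis.map_apply, hb k])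
      have hspan : Submodule.span ℂ (Set.range fun k => e (ξ k)) = ⊤ := by
        rw [← h1, Module.Basis.span_eq]
      rw [LinearMap.range_eq_map, ← hspan, Submodule.map_span]
      apply le_antisymm
      · rw [Submodule.span_le]
        rintro y ⟨x, ⟨k, rfl⟩, rfl⟩
        rcases eq_or_ne k i with rfl | hk
        · rw [hmv, hηdef k]
          exact Submodule.subset_span rfl
        · rw [hmv, hkill k i (Ne.symm hk), map_zero]
          exact Submodule.zero_mem _
      · rw [Submodule.span_le, Set.singleton_subset_iff]
        refine Submodule.subset_span ⟨e (ξ i), ⟨i, rfl⟩, ?_⟩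
        rw [hmv, hηdef i]
    have hne : e (η i) ≠ 0 := fun h => hηne i (by simpa using e.injective (by simpa using h))
    show Module.finrank ℂ ↥(LinearMap.range (c i).mulVecLin) = 1
    rw [hrange]
    exact finrank_span_singleton hne
  exact ⟨G1, G2, G3⟩
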